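/- Let 𝓗 be an admissible affine hyperplane arrangement in E with fundamental domain ⋀ (the closure of a fixed chamber). Then every flat L' of 𝓗 is W_𝓗-conjugate to a flat lying over ⋀: there exists w ∈ W_𝓗 such that w(L') equals the affine span of w(L') ∩ ⋀. -/

import Mathlib

section ArrangementSetup

variable {V : Type*} [NormedAddCommGroup V] [InnerProductSpace ℝ V] [FiniteDimensional ℝ V]
variable {E : Type*} [MetricSpace E] [NormedAddTorsor V E]

/-- An affine hyperplane of the Euclidean affine space `E`: a nonempty affine subspace whose
direction has codimension `1`. -/
def IsAffineHyperplane (H : AffineSubspace ℝ E) : Prop :=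
  (H : Set E).Nonempty ∧ Module.finrank ℝ H.direction + 1 = Module.finrank ℝ V

/-- `g` is the orthogonal reflection of `E` across the affine hyperplane `H`: an isometric
affine automorphism, different from the identity, fixing `H` pointwise. -/
def IsReflectionAcross (H : AffineSubspace ℝ E) (g : E ≃ᵃ[ℝ] E) : Prop :=
  Isometry g ∧ (∀ x ∈ H, g x = x) ∧ g ≠ AffineEquiv.refl ℝ E

/-- The group `W_𝓗` generated by the reflections across the hyperplanes of `𝓗`. -/
def reflGroup (𝓗 : Set (AffineSubspace ℝ E)) : Subgroup (E ≃ᵃ[ℝ] E) :=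
  Subgroup.closure {g | ∃ H ∈ 𝓗, IsReflectionAcross H g}

/-- `𝓗` is admissible: `W_𝓗` (a discrete group) acts properly on `E` and preserves `𝓗`. -/
def Admissible (𝓗 : Set (AffineSubspace ℝ E)) : Prop :=
  (∀ w ∈ reflGroup 𝓗, ∀ H ∈ 𝓗, H.map w.toAffineMap ∈ 𝓗) ∧
  (∀ s t : Set E, IsCompact s → IsCompact t →
    {w : E ≃ᵃ[ℝ] E | w ∈ reflGroup 𝓗 ∧ (⇑w '' s ∩ t).Nonempty}.Finite)

/-- A chamber of `𝓗`: a connected component of the complement of the union of the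
hyperplanes. -/
def IsChamber (𝓗 : Set (AffineSubspace ℝ E)) (C : Set E) : Prop :=
  ∃ x ∈ (⋃ H ∈ 𝓗, (H : Set E))ᶜ, C = connectedComponentIn (⋃ H ∈ 𝓗, (H : Set E))ᶜ x

/-- A flat of `𝓗`: a nonempty intersection of hyperplanes of `𝓗`. -/
def IsFlat (𝓗 : Set (AffineSubspace ℝ E)) (L : AffineSubspace ℝ E) : Prop :=
  (L : Set E).Nonempty ∧ ∃ S ⊆ 𝓗, L = sInf S

/-- The flat `L` lies over the fundamental domain `A` if `L` is the affine span of `L ∩ A`. -/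
def LiesOver (L : AffineSubspace ℝ E) (A : Set E) : Prop :=
  L = affineSpan ℝ ((L : Set E) ∩ A)

end ArrangementSetup

open scoped RealInnerProductSpace
open Topology Filter
set_option linter.unusedSectionVars false
set_option maxHeartbeats 1000000

open scoped RealInnerProductSpace
set_option linter.unusedSectionVars false

section Aux

variable {V : Type*} [NormedAddCommGroup V] [InnerProductSpace ℝ V] [FiniteDimensional ℝ V]
variable {E : Type*} [MetricSpace E] [NormedAddTorsor V E]

/-- point on the line from `a` to `b` -/
noncomputable def seg (a b : E) (t : ℝ) : E := t • (b -ᵥ a) +ᵥ a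

lemma seg_zero (a b : E) : seg a b 0 = a := by simp [seg]

lemma seg_one (a b : E) : seg a b 1 = b := by simp [seg]

lemma seg_continuous (a b : E) : Continuous fun t : ℝ => seg a b t := by
  exact (continuous_id.smul continuous_const).vadd continuous_const

lemma seg_mem (L : AffineSubspace ℝ E) {a b : E} (ha : a ∈ L) (hb : b ∈ L) (t : ℝ) :
    seg a b t ∈ L :=
  AffineSubspace.vadd_mem_of_mem_direction
    (Submodule.smul_mem _ _ (AffineSubspace.vsub_mem_direction hb ha)) ha

lemma seg_dist (a b : E) (t : ℝ) : dist (seg a b t) a = |t| * dist b a := by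
  rw [seg, dist_eq_norm_vsub V, vadd_vsub, norm_smul, Real.norm_eq_abs,
    dist_eq_norm_vsub V]

lemma inner_seg (u : V) (p0 a b : E) (t : ℝ) :
    ⟪u, seg a b t -ᵥ p0⟫ = ⟪u, a -ᵥ p0⟫ + t * (⟪u, b -ᵥ p0⟫ - ⟪u, a -ᵥ p0⟫) := by
  have h : seg a b t -ᵥ p0 = t • (b -ᵥ a) + (a -ᵥ p0) := by
    rw [seg, vadd_vsub_assoc]
  have h2 : (b : E) -ᵥ a = (b -ᵥ p0) - (a -ᵥ p0) := by
    rw [vsub_sub_vsub_cancel_right]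
  rw [h, h2, inner_add_right, real_inner_smul_right, inner_sub_right]
  ring


lemma hyperplane_data {H : AffineSubspace ℝ E}
    (hne : (H : Set E).Nonempty) (hrk : Module.finrank ℝ H.direction + 1 = Module.finrank ℝ V) :
    ∃ (p0 : E) (u : V), p0 ∈ H ∧ ‖u‖ = 1 ∧ ∀ y : E, y ∈ H ↔ ⟪u, y -ᵥ p0⟫ = 0 := by
  obtain ⟨p0, hp0⟩ := hne
  have hdir_ne_top : H.direction ≠ ⊤ := by
    intro h
    rw [h, finrank_top] at hrk
    omega
  have horth : H.directionᗮ ≠ ⊥ := by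
    rwa [ne_eq, Submodule.orthogonal_eq_bot_iff]
  obtain ⟨u0, hu0mem, hu0ne⟩ := Submodule.exists_mem_ne_zero_of_ne_bot horth
  set u := ‖u0‖⁻¹ • u0 with hu_def
  have hu0norm : ‖u0‖ ≠ 0 := norm_ne_zero_iff.mpr hu0ne
  have humem : u ∈ H.directionᗮ := Submodule.smul_mem _ _ hu0mem
  have hunorm : ‖u‖ = 1 := by
    rw [hu_def, norm_smul, norm_inv, norm_norm, inv_mul_cancel₀ hu0norm]
  have hune : u ≠ 0 := by
    intro h; rw [h, norm_zero] at hunorm; norm_num at hunorm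
  -- the kernel of ⟪u, ·⟫ equals H.direction
  set φ : V →ₗ[ℝ] ℝ := innerₛₗ ℝ u with hφ_def
  have hφu : φ u = 1 := by
    simp only [hφ_def, innerₛₗ_apply_apply]
    rw [real_inner_self_eq_norm_sq, hunorm]; norm_num
  have hker_le : H.direction ≤ LinearMap.ker φ := by
    intro v hv
    simp only [LinearMap.mem_ker, hφ_def, innerₛₗ_apply_apply]
    rw [real_inner_comm]
    exact humem v hv
  have hrange : LinearMap.range φ = ⊤ := by
    rw [eq_top_iff]
    intro c _
    exact ⟨c • u, by simp [map_smul, hφu]⟩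
  have hkerrank : Module.finrank ℝ (LinearMap.ker φ) + 1 = Module.finrank ℝ V := by
    have := LinearMap.finrank_range_add_finrank_ker φ
    rw [hrange, finrank_top] at this
    have h1 : Module.finrank ℝ ℝ = 1 := Module.finrank_self ℝ
    omega
  have hker_eq : H.direction = LinearMap.ker φ := by
    apply Submodule.eq_of_le_of_finrank_le hker_le
    omega
  refine ⟨p0, u, hp0, hunorm, fun y => ?_⟩
  constructor
  · intro hy
    have : y -ᵥ p0 ∈ H.direction := AffineSubspace.vsub_mem_direction hy hp0
    rw [hker_eq] at this
    simpa only [LinearMap.mem_ker, hφ_def, innerₛₗ_apply_apply] using this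
  · intro hy
    have : y -ᵥ p0 ∈ LinearMap.ker φ := by
      simpa only [LinearMap.mem_ker, hφ_def, innerₛₗ_apply_apply] using hy
    rw [← hker_eq] at this
    have := AffineSubspace.vadd_mem_of_mem_direction this hp0
    rwa [vsub_vadd] at this

/-- reflection across the hyperplane through `p0` with unit normal `u` -/
lemma exists_reflection (p0 : E) (u : V) (hu : ‖u‖ = 1) :
    ∃ g : E ≃ᵃ[ℝ] E, ∀ y : E, g y = (-(2 * ⟪u, y -ᵥ p0⟫)) • u +ᵥ y := by
  have huu : ⟪u, u⟫ = 1 := by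
    rw [real_inner_self_eq_norm_sq, hu]; norm_num
  set l : V →ₗ[ℝ] V :=
    { toFun := fun v => v - (2 * ⟪u, v⟫) • u
      map_add' := fun a b => by
        show (a + b) - (2 * ⟪u, a + b⟫) • u = (a - (2 * ⟪u, a⟫) • u) + (b - (2 * ⟪u, b⟫) • u)
        rw [inner_add_right]; module
      map_smul' := fun c a => by
        show (c • a) - (2 * ⟪u, c • a⟫) • u = c • (a - (2 * ⟪u, a⟫) • u)
        rw [real_inner_smul_right]; module } with hl_def
  have hl_apply : ∀ v, l v = v - (2 * ⟪u, v⟫) • u := fun v => rfl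
  have hinv : Function.Involutive l := by
    intro v
    rw [hl_apply, hl_apply, inner_sub_right, real_inner_smul_right, huu]
    module
  set e : V ≃ₗ[ℝ] V := LinearEquiv.ofInvolutive l hinv with he_def
  have he_apply : ∀ v, e v = v - (2 * ⟪u, v⟫) • u := fun v => rfl
  set gfun : E → E := fun y => (-(2 * ⟪u, y -ᵥ p0⟫)) • u +ᵥ y with hgfun_def
  have hgp0 : gfun p0 = p0 := by
    simp [hgfun_def, vsub_self, inner_zero_right]
  have hkey : ∀ p' : E, gfun p' = e (p' -ᵥ p0) +ᵥ gfun p0 := by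
    intro p'
    rw [hgp0, he_apply, hgfun_def]
    simp only
    rw [sub_eq_neg_add, ← neg_smul, add_vadd, vsub_vadd]
  exact ⟨AffineEquiv.mk' gfun e p0 hkey, fun y => rfl⟩


lemma refl_vsub {g : E ≃ᵃ[ℝ] E} {p0 : E} {u : V}
    (hg : ∀ y : E, g y = (-(2 * ⟪u, y -ᵥ p0⟫)) • u +ᵥ y) (y c : E) :
    g y -ᵥ c = (y -ᵥ c) - (2 * ⟪u, y -ᵥ p0⟫) • u := by
  rw [hg y, vadd_vsub_assoc, neg_smul, neg_add_eq_sub]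

lemma refl_dist_sq {g : E ≃ᵃ[ℝ] E} {p0 : E} {u : V} (hu : ‖u‖ = 1)
    (hg : ∀ y : E, g y = (-(2 * ⟪u, y -ᵥ p0⟫)) • u +ᵥ y) (y c : E) :
    dist (g y) c ^ 2 = dist y c ^ 2 + 4 * ⟪u, y -ᵥ p0⟫ * ⟪u, c -ᵥ p0⟫ := by
  have hvc : ⟪u, y -ᵥ c⟫ = ⟪u, y -ᵥ p0⟫ - ⟪u, c -ᵥ p0⟫ := by
    rw [← inner_sub_right, vsub_sub_vsub_cancel_right]
  rw [dist_eq_norm_vsub V (g y) c, dist_eq_norm_vsub V y c, refl_vsub hg, norm_sub_sq_real]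
  have h3 : ⟪y -ᵥ c, (2 * ⟪u, y -ᵥ p0⟫) • u⟫ =
      (2 * ⟪u, y -ᵥ p0⟫) * (⟪u, y -ᵥ p0⟫ - ⟪u, c -ᵥ p0⟫) := by
    have hcomm : ⟪y -ᵥ c, u⟫ = ⟪u, y -ᵥ c⟫ := real_inner_comm _ _
    rw [real_inner_smul_right, hcomm, hvc]
  have h4 : ‖(2 * ⟪u, y -ᵥ p0⟫) • u‖ ^ 2 = (2 * ⟪u, y -ᵥ p0⟫) ^ 2 := by
    rw [norm_smul, Real.norm_eq_abs, mul_pow, sq_abs, hu]; ring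
  rw [h3, h4]; ring

lemma refl_isometry {g : E ≃ᵃ[ℝ] E} {p0 : E} {u : V} (hu : ‖u‖ = 1)
    (hg : ∀ y : E, g y = (-(2 * ⟪u, y -ᵥ p0⟫)) • u +ᵥ y) : Isometry ⇑g := by
  have huu : ⟪u, u⟫ = 1 := by
    rw [real_inner_self_eq_norm_sq, hu]; norm_num
  apply Isometry.of_dist_eq
  intro x y
  have h1 : g x -ᵥ g y = (x -ᵥ y) - (2 * ⟪u, x -ᵥ y⟫) • u := by
    rw [hg x, hg y, vadd_vsub_assoc, vsub_vadd_eq_vsub_sub]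
    have hxy : ⟪u, x -ᵥ y⟫ = ⟪u, x -ᵥ p0⟫ - ⟪u, y -ᵥ p0⟫ := by
      rw [← inner_sub_right, vsub_sub_vsub_cancel_right]
    rw [hxy]
    module
  have h2 : ‖g x -ᵥ g y‖ ^ 2 = ‖x -ᵥ y‖ ^ 2 := by
    rw [h1, norm_sub_sq_real, real_inner_smul_right, norm_smul, real_inner_comm,
      Real.norm_eq_abs, mul_pow, sq_abs, hu]
    ring
  rw [dist_eq_norm_vsub V (g x) (g y), dist_eq_norm_vsub V x y]
  have := congrArg Real.sqrt h2
  rwa [Real.sqrt_sq (norm_nonneg _), Real.sqrt_sq (norm_nonneg _)] at this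

lemma refl_fix_iff {g : E ≃ᵃ[ℝ] E} {p0 : E} {u : V} (hu : ‖u‖ = 1)
    (hg : ∀ y : E, g y = (-(2 * ⟪u, y -ᵥ p0⟫)) • u +ᵥ y) (y : E) :
    g y = y ↔ ⟪u, y -ᵥ p0⟫ = 0 := by
  rw [hg y]
  constructor
  · intro h
    have h0 := vadd_right_cancel y ((h.trans (zero_vadd V y).symm))
    have hune : u ≠ 0 := by
      intro hz; rw [hz, norm_zero] at hu; norm_num at hu
    rcases smul_eq_zero.mp h0 with h1 | h1
    · have : (2 : ℝ) * ⟪u, y -ᵥ p0⟫ = 0 := by linarith [neg_eq_zero.mp h1]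
      linarith
    · exact absurd h1 hune
  · intro h
    rw [h]
    simp

lemma contf (p0 : E) (u : V) : Continuous fun y : E => ⟪u, y -ᵥ p0⟫ :=
  continuous_const.inner (continuous_id.vsub continuous_const)

/-- A continuous nowhere-vanishing function on a preconnected set: values at two points have
the same sign. -/
lemma sign_const {f : E → ℝ} (hf : Continuous f) {s : Set E} (hs : IsPreconnected s)
    (hz : ∀ y ∈ s, f y ≠ 0) {a b : E} (ha : a ∈ s) (hb : b ∈ s) : 0 < f a * f b := by
  have himg : IsPreconnected (f '' s) := hs.image f hf.continuousOn
  have hoc := himg.ordConnected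
  rcases lt_or_gt_of_ne (hz a ha) with hfa | hfa <;>
    rcases lt_or_gt_of_ne (hz b hb) with hfb | hfb
  · exact mul_pos_of_neg_of_neg hfa hfb
  · exfalso
    have h0 : (0 : ℝ) ∈ f '' s := hoc.out ⟨a, ha, rfl⟩ ⟨b, hb, rfl⟩ ⟨hfa.le, hfb.le⟩
    obtain ⟨y, hy, hy0⟩ := h0
    exact hz y hy hy0
  · exfalso
    have h0 : (0 : ℝ) ∈ f '' s := hoc.out ⟨b, hb, rfl⟩ ⟨a, ha, rfl⟩ ⟨hfb.le, hfa.le⟩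
    obtain ⟨y, hy, hy0⟩ := h0
    exact hz y hy hy0
  · exact mul_pos hfa hfb

/-- A set closed under segments from a base point is preconnected. -/
lemma preconnected_of_seg {s : Set E} {x : E} (hx : x ∈ s)
    (h : ∀ y ∈ s, ∀ t ∈ Set.Icc (0:ℝ) 1, seg x y t ∈ s) : IsPreconnected s := by
  apply isPreconnected_of_forall x
  intro y hy
  refine ⟨seg x y '' Set.Icc 0 1, ?_, ?_, ?_, ?_⟩
  · rintro _ ⟨t, ht, rfl⟩; exact h y hy t ht
  · exact ⟨0, Set.mem_Icc.mpr (by norm_num), seg_zero x y⟩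
  · exact ⟨1, Set.mem_Icc.mpr (by norm_num), seg_one x y⟩
  · exact (isPreconnected_Icc).image _ (seg_continuous x y).continuousOn

include V in
lemma ball_preconnected (q : E) (ε : ℝ) : IsPreconnected (Metric.ball q ε) := by
  rcases Set.eq_empty_or_nonempty (Metric.ball q ε) with h | h
  · rw [h]; exact isPreconnected_empty
  · obtain ⟨z, hz⟩ := h
    have hε : 0 < ε := lt_of_le_of_lt dist_nonneg (Metric.mem_ball.mp hz)
    apply preconnected_of_seg (V := V) (Metric.mem_ball_self hε)
    intro y hy t ht
    rw [Metric.mem_ball, seg_dist, abs_of_nonneg ht.1]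
    calc t * dist y q ≤ 1 * dist y q := by
          apply mul_le_mul_of_nonneg_right ht.2 dist_nonneg
      _ < ε := by rw [one_mul]; exact Metric.mem_ball.mp hy

lemma span_of_ball (L : AffineSubspace ℝ E) {x : E} {ε : ℝ} (hx : x ∈ L) (hε : 0 < ε) :
    L ≤ affineSpan ℝ ((L : Set E) ∩ Metric.ball x ε) := by
  intro y hy
  set d := dist y x with hd
  have hd0 : 0 ≤ d := dist_nonneg
  set t : ℝ := ε / (2 * (d + 1)) with ht_def
  have ht : 0 < t := by positivity
  set z := seg x y t with hz_def
  have hzL : z ∈ L := seg_mem L hx hy t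
  have hzball : z ∈ Metric.ball x ε := by
    rw [Metric.mem_ball, hz_def, seg_dist, abs_of_pos ht, ← hd,
      ht_def, div_mul_eq_mul_div, div_lt_iff₀ (by positivity)]
    nlinarith
  have hxball : x ∈ Metric.ball x ε := Metric.mem_ball_self hε
  have hxs : x ∈ affineSpan ℝ ((L : Set E) ∩ Metric.ball x ε) :=
    subset_affineSpan ℝ _ ⟨hx, hxball⟩
  have hzs : z ∈ affineSpan ℝ ((L : Set E) ∩ Metric.ball x ε) :=
    subset_affineSpan ℝ _ ⟨hzL, hzball⟩
  have hyz : y = seg x z t⁻¹ := by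
    rw [hz_def, seg, seg, vadd_vsub, smul_smul, inv_mul_cancel₀ (ne_of_gt ht), one_smul,
      vsub_vadd]
  rw [hyz]
  exact seg_mem _ hxs hzs t⁻¹

lemma seg_sign_pos {A B t : ℝ} (hBA : 0 < B * A) (ht0 : 0 ≤ t) (ht1 : t ≤ 1) :
    0 < (A + t * (B - A)) * A := by
  rcases eq_or_lt_of_le ht0 with rfl | ht0'
  · have hA : A ≠ 0 := right_ne_zero_of_mul hBA.ne'
    simpa using mul_self_pos.2 hA
  · nlinarith [mul_nonneg (sub_nonneg.2 ht1) (sq_nonneg A)]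

lemma seg_sign_pos' {A B t : ℝ} (hB : B ≠ 0) (hAB : 0 ≤ A * B) (ht0 : 0 < t) (ht1 : t ≤ 1) :
    0 < (A + t * (B - A)) * B := by
  nlinarith [mul_self_pos.2 hB, mul_nonneg (sub_nonneg.2 ht1) hAB]

include V in
lemma proper_of_torsor : ProperSpace E := by
  have hne : Nonempty E := AddTorsor.nonempty (G := V)
  obtain ⟨x⟩ := hne
  have hiso := (IsometryEquiv.vaddConst (V := V) x).isometry
  exact hiso.antilipschitz.properSpace hiso.continuous
    (IsometryEquiv.vaddConst (V := V) x).surjective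

end Aux

/-- Let `𝓗` be an admissible affine hyperplane arrangement in `E` with
fundamental domain `⋀` (the closure of a fixed chamber).  Then every flat `L'` of `𝓗` is
`W_𝓗`-conjugate to a flat lying over `⋀`: there exists `w ∈ W_𝓗` such that `w(L')` equals
the affine span of `w(L') ∩ ⋀`. -/

theorem flat_conjugate_to_flat_lying_over
    {V : Type*} [NormedAddCommGroup V] [InnerProductSpace ℝ V] [FiniteDimensional ℝ V]
    {E : Type*} [MetricSpace E] [NormedAddTorsor V E]
    (𝓗 : Set (AffineSubspace ℝ E)) (h𝓗 : ∀ H ∈ 𝓗, IsAffineHyperplane (V := V) H)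
    (hadm : Admissible 𝓗)
    (C : Set E) (hC : IsChamber 𝓗 C) (A : Set E) (hA : A = closure C)
    (L' : AffineSubspace ℝ E) (hL' : IsFlat 𝓗 L') :
    ∃ w ∈ reflGroup 𝓗, LiesOver (L'.map w.toAffineMap) A := by
  classical
  haveI hproper : ProperSpace E := proper_of_torsor (V := V)
  haveI hcompleteE : CompleteSpace E := inferInstance
  obtain ⟨x0, hx0, hCdef⟩ := hC
  have hx0' : ∀ H ∈ 𝓗, x0 ∉ H := by
    intro H hH hx
    simp only [Set.mem_compl_iff, Set.mem_iUnion] at hx0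
    exact hx0 ⟨H, hH, hx⟩
  have hdata : ∀ H : 𝓗, ∃ (p0 : E) (u : V), p0 ∈ (H : AffineSubspace ℝ E) ∧ ‖u‖ = 1 ∧
      ∀ y : E, y ∈ (H : AffineSubspace ℝ E) ↔ ⟪u, y -ᵥ p0⟫ = 0 :=
    fun H => hyperplane_data (h𝓗 H.1 H.2).1 (h𝓗 H.1 H.2).2
  choose p0 u hp0 hu hmem using hdata
  set f : 𝓗 → E → ℝ := fun H y => ⟪u H, y -ᵥ p0 H⟫ with hf_def
  have hfcont : ∀ H : 𝓗, Continuous (f H) := fun H => contf (p0 H) (u H)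
  have hfmem : ∀ (H : 𝓗) (y : E), y ∈ (H : AffineSubspace ℝ E) ↔ f H y = 0 := hmem
  have hfseg : ∀ (H : 𝓗) (a b : E) (t : ℝ),
      f H (seg a b t) = f H a + t * (f H b - f H a) := by
    intro H a b t
    simp only [hf_def]
    exact inner_seg (u H) (p0 H) a b t
  -- reflections
  have hrefl : ∀ H : 𝓗, ∃ g : E ≃ᵃ[ℝ] E, ∀ y : E, g y = (-(2 * f H y)) • u H +ᵥ y :=
    fun H => exists_reflection (p0 H) (u H) (hu H)
  choose g hg using hrefl
  have hgrefl : ∀ H : 𝓗, IsReflectionAcross (H : AffineSubspace ℝ E) (g H) := by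
    intro H
    refine ⟨refl_isometry (hu H) (hg H), ?_, ?_⟩
    · intro y hy
      exact (refl_fix_iff (hu H) (hg H) y).2 ((hfmem H y).1 hy)
    · intro hid
      have h1 : g H (u H +ᵥ p0 H) = u H +ᵥ p0 H := by rw [hid]; rfl
      have h2 := (refl_fix_iff (hu H) (hg H) (u H +ᵥ p0 H)).1 h1
      simp only [vadd_vsub] at h2
      rw [real_inner_self_eq_norm_sq, hu H] at h2
      norm_num at h2
  have hgmem : ∀ H : 𝓗, g H ∈ reflGroup 𝓗 :=
    fun H => Subgroup.subset_closure ⟨H.1, H.2, hgrefl H⟩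
  have hgfix : ∀ (H : 𝓗) (y : E), g H y = y ↔ f H y = 0 :=
    fun H y => refl_fix_iff (hu H) (hg H) y
  have hfx0 : ∀ H : 𝓗, f H x0 ≠ 0 := fun H h => hx0' H.1 H.2 ((hfmem H x0).2 h)
  -- local finiteness
  have hlocfin : ∀ (q : E) (r : ℝ),
      {H : 𝓗 | ((H : Set E) ∩ Metric.closedBall q r).Nonempty}.Finite := by
    intro q r
    have hfin := hadm.2 (Metric.closedBall q r) (Metric.closedBall q r)
      (isCompact_closedBall q r) (isCompact_closedBall q r)
    apply Set.Finite.of_finite_image (f := fun H : 𝓗 => g H)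
    · apply hfin.subset
      rintro _ ⟨H, ⟨y, hyH, hyB⟩, rfl⟩
      exact ⟨hgmem H, ⟨y, ⟨y, hyB, (hgfix H y).2 ((hfmem H y).1 hyH)⟩, hyB⟩⟩
    · intro H1 _ H2 _ heq
      have heq' : g H1 = g H2 := heq
      apply Subtype.ext
      apply SetLike.ext
      intro y
      rw [hfmem H1 y, ← hgfix H1 y, heq', hgfix H2 y, ← hfmem H2 y]
  -- countability of 𝓗
  have hcount : (Set.univ : Set 𝓗).Countable := by
    have huniv : (Set.univ : Set 𝓗) =
        ⋃ n : ℕ, {H : 𝓗 | ((H : Set E) ∩ Metric.closedBall x0 n).Nonempty} := by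
      ext H
      simp only [Set.mem_univ, true_iff, Set.mem_iUnion]
      obtain ⟨y, hy⟩ := (h𝓗 H.1 H.2).1
      obtain ⟨n, hn⟩ := exists_nat_ge (dist y x0)
      exact ⟨n, y, hy, Metric.mem_closedBall.2 hn⟩
    rw [huniv]
    exact Set.countable_iUnion fun n => (hlocfin x0 n).countable
  -- chamber description
  set O : Set E := {y | ∀ H : 𝓗, 0 < f H y * f H x0} with hO_def
  set D : Set E := {y | ∀ H : 𝓗, 0 ≤ f H y * f H x0} with hD_def
  have hcompl : ∀ y : E, y ∈ (⋃ H ∈ 𝓗, (H : Set E))ᶜ ↔ ∀ H : 𝓗, f H y ≠ 0 := by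
    intro y
    constructor
    · intro h H hf0
      exact h (Set.mem_biUnion H.2 ((hfmem H y).2 hf0))
    · intro h hy
      obtain ⟨Hs, hHs⟩ := Set.mem_iUnion.1 hy
      obtain ⟨hHs𝓗, hyH⟩ := Set.mem_iUnion.1 hHs
      exact h ⟨Hs, hHs𝓗⟩ ((hfmem ⟨Hs, hHs𝓗⟩ y).1 hyH)
  have hx0O : x0 ∈ O := fun H => mul_self_pos.2 (hfx0 H)
  have hOC : O ⊆ C := by
    rw [hCdef]
    apply IsPreconnected.subset_connectedComponentIn ?_ hx0O
    · intro y hy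
      exact (hcompl y).2 fun H => fun h0 => by
        have := hy H; rw [h0, zero_mul] at this; exact lt_irrefl 0 this
    · apply preconnected_of_seg (V := V) hx0O
      intro y hy t ht H
      rw [hfseg H x0 y t]
      exact seg_sign_pos (hy H) ht.1 ht.2
  have hCO : C ⊆ O := by
    intro y hy H
    have hCpre : IsPreconnected C := by
      rw [hCdef]; exact isPreconnected_connectedComponentIn
    have hCsub : C ⊆ (⋃ H ∈ 𝓗, (H : Set E))ᶜ := by
      rw [hCdef]; exact connectedComponentIn_subset _ _
    have hx0C : x0 ∈ C := by rw [hCdef]; exact mem_connectedComponentIn hx0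
    exact sign_const (hfcont H) hCpre (fun z hz => (hcompl z).1 (hCsub hz) H) hy hx0C
  have hCeq : C = O := Set.Subset.antisymm hCO hOC
  have hDclosed : IsClosed D := by
    have hDeq : D = ⋂ H : 𝓗, {y : E | 0 ≤ f H y * f H x0} := by
      ext y; simp only [hD_def, Set.mem_iInter, Set.mem_setOf_eq]
    rw [hDeq]
    exact isClosed_iInter fun H =>
      isClosed_le continuous_const ((hfcont H).mul continuous_const)
  have hclosCD : closure C = D := by
    apply Set.Subset.antisymm
    · apply closure_minimal _ hDclosed
      rw [hCeq]
      intro y hy H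
      exact (hy H).le
    · intro y hyD
      apply mem_closure_of_tendsto (f := fun t : ℝ => seg y x0 t) (b := 𝓝[>] (0:ℝ))
      · have h1 : Filter.Tendsto (fun t : ℝ => seg y x0 t) (𝓝 0) (𝓝 y) := by
          have := (seg_continuous (V := V) y x0).tendsto 0
          rwa [seg_zero] at this
        exact h1.mono_left nhdsWithin_le_nhds
      · filter_upwards [Ioo_mem_nhdsGT_of_mem (Set.mem_Ico.mpr ⟨le_refl (0:ℝ), one_pos⟩)]
          with t ht
        rw [hCeq]
        intro H
        rw [hfseg H y x0 t]
        exact seg_sign_pos' (hfx0 H) (hyD H) ht.1 ht.2.le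
  -- generic point of L'
  obtain ⟨⟨pL, hpL⟩, S, hS𝓗, hLS⟩ := hL'
  have hL'closed : IsClosed (L' : Set E) := L'.closed_of_finiteDimensional
  haveI : CompleteSpace (L' : Set E) := hL'closed.completeSpace_coe
  set T : 𝓗 → Set (L' : Set E) :=
    fun H => {z : (L' : Set E) | (z : E) ∈ (H : AffineSubspace ℝ E)} with hT_def
  have hTclosed : ∀ H : 𝓗, IsClosed (T H) := fun H =>
    ((H : AffineSubspace ℝ E).closed_of_finiteDimensional).preimage continuous_subtype_val
  set Bad : Set 𝓗 := {H : 𝓗 | ¬ L' ≤ (H : AffineSubspace ℝ E)} with hBad_def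
  have hTnd : ∀ H ∈ Bad, IsNowhereDense (T H) := by
    intro H hHBad
    rw [(hTclosed H).isNowhereDense_iff]
    rw [Set.eq_empty_iff_forall_notMem]
    intro z hz
    obtain ⟨ε, hε, hball⟩ := Metric.isOpen_iff.1 isOpen_interior z hz
    apply hHBad
    have hsub : (L' : Set E) ∩ Metric.ball (z : E) ε ⊆ (H : Set E) := by
      rintro y ⟨hyL, hyb⟩
      have hmem' : (⟨y, hyL⟩ : (L' : Set E)) ∈ Metric.ball z ε := by
        rw [Metric.mem_ball, Subtype.dist_eq]
        exact hyb
      have hT' : (⟨y, hyL⟩ : (L' : Set E)) ∈ T H := interior_subset (hball hmem')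
      exact hT'
    calc L' ≤ affineSpan ℝ ((L' : Set E) ∩ Metric.ball (z : E) ε) :=
          span_of_ball L' z.2 hε
      _ ≤ (H : AffineSubspace ℝ E) := affineSpan_le.2
          (hsub.trans (by exact fun y hy => hy))
  have hmeagre : IsMeagre (⋃ H ∈ Bad, T H) := by
    rw [isMeagre_iff_countable_union_isNowhereDense]
    refine ⟨T '' Bad, ?_, ?_, ?_⟩
    · rintro _ ⟨H, hH, rfl⟩
      exact hTnd H hH
    · exact ((hcount.mono (Set.subset_univ Bad)).image T)
    · intro z hz
      obtain ⟨s', hs'⟩ := Set.mem_iUnion.1 hz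
      obtain ⟨hs'Bad, hzs'⟩ := Set.mem_iUnion.1 hs'
      exact ⟨T s', ⟨s', hs'Bad, rfl⟩, hzs'⟩
  haveI : Nonempty (L' : Set E) := ⟨⟨pL, hpL⟩⟩
  obtain ⟨phat, hphat⟩ := (dense_of_mem_residual hmeagre).nonempty
  set p : E := (phat : E) with hp_def
  have hpL' : p ∈ L' := phat.2
  have hgeneric : ∀ H : 𝓗, p ∈ (H : AffineSubspace ℝ E) → L' ≤ (H : AffineSubspace ℝ E) := by
    intro H hpH
    by_contra hnot
    exact hphat (Set.mem_biUnion (show H ∈ Bad from hnot) (show phat ∈ T H from hpH))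
  -- minimize distance over the orbit
  set R := dist p x0 with hR_def
  have hFfin0 := hadm.2 {p} (Metric.closedBall x0 R) isCompact_singleton
    (isCompact_closedBall x0 R)
  set F : Set (E ≃ᵃ[ℝ] E) :=
    {w : E ≃ᵃ[ℝ] E | w ∈ reflGroup 𝓗 ∧ w p ∈ Metric.closedBall x0 R} with hF_def
  have hFfin : F.Finite := by
    apply hFfin0.subset
    rintro w ⟨hw1, hw2⟩
    exact ⟨hw1, ⟨w p, ⟨p, rfl, rfl⟩, hw2⟩⟩
  have h1F : (1 : E ≃ᵃ[ℝ] E) ∈ F :=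
    ⟨(reflGroup 𝓗).one_mem, Metric.mem_closedBall.2 (le_of_eq rfl)⟩
  obtain ⟨w, hwF, hwmin⟩ := Set.exists_min_image F (fun w => dist (w p) x0) hFfin ⟨_, h1F⟩
  set q := w p with hq_def
  have hqD : q ∈ D := by
    intro H
    by_contra hneg
    push_neg at hneg
    have hgw : g H * w ∈ reflGroup 𝓗 := (reflGroup 𝓗).mul_mem (hgmem H) hwF.1
    have hdistsq : dist (g H q) x0 ^ 2 = dist q x0 ^ 2 + 4 * f H q * f H x0 := by
      simp only [hf_def]
      exact refl_dist_sq (hu H) (hg H) q x0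
    have h1 : dist (g H q) x0 ^ 2 < dist q x0 ^ 2 := by
      rw [hdistsq]; nlinarith
    have hlt : dist (g H q) x0 < dist q x0 :=
      lt_of_pow_lt_pow_left₀ 2 dist_nonneg h1
    have happ : (g H * w) p = g H q := by
      simp only [AffineEquiv.coe_mul, Function.comp_apply, hq_def]
    have hmemF : g H * w ∈ F := by
      refine ⟨hgw, Metric.mem_closedBall.2 ?_⟩
      rw [happ]
      exact le_trans hlt.le hwF.2
    have := hwmin _ hmemF
    rw [happ] at this
    exact absurd (lt_of_le_of_lt this hlt) (lt_irrefl _)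
  refine ⟨w, hwF.1, ?_⟩
  set M := L'.map w.toAffineMap with hM_def
  have hqM : q ∈ M := AffineSubspace.mem_map.2 ⟨p, hpL', rfl⟩
  have hwinv : ∀ y : E, (w⁻¹ : E ≃ᵃ[ℝ] E) (w y) = y := fun y =>
    w.symm_apply_apply y
  have hMgeneric : ∀ H : 𝓗, q ∈ (H : AffineSubspace ℝ E) →
      (M : Set E) ⊆ (H : Set E) := by
    intro H hqH y hyM
    obtain ⟨z, hzL, rfl⟩ := AffineSubspace.mem_map.1 hyM
    have hw_inv : w⁻¹ ∈ reflGroup 𝓗 := (reflGroup 𝓗).inv_mem hwF.1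
    have hH' : (H : AffineSubspace ℝ E).map (w⁻¹ : E ≃ᵃ[ℝ] E).toAffineMap ∈ 𝓗 :=
      hadm.1 _ hw_inv H.1 H.2
    have hpH' : p ∈ (H : AffineSubspace ℝ E).map (w⁻¹ : E ≃ᵃ[ℝ] E).toAffineMap :=
      AffineSubspace.mem_map.2 ⟨q, hqH, hwinv p⟩
    have hle := hgeneric ⟨_, hH'⟩ hpH'
    obtain ⟨h', hh'H, hzeq⟩ := AffineSubspace.mem_map.1 (hle hzL)
    have hwz : w.toAffineMap z = h' := by
      rw [← hzeq]
      exact w.apply_symm_apply h'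
    rw [hwz]
    exact hh'H
  -- the finitely many nearby hyperplanes not containing q
  set 𝓕 : Set 𝓗 := {H : 𝓗 | ((H : Set E) ∩ Metric.closedBall q 1).Nonempty ∧
    q ∉ (H : AffineSubspace ℝ E)} with h𝓕_def
  have h𝓕fin : 𝓕.Finite := (hlocfin q 1).subset fun H hH => hH.1
  set U : Set E := ⋃ H ∈ 𝓕, (H : Set E) with hU_def
  have hUclosed : IsClosed U :=
    h𝓕fin.isClosed_biUnion fun H _ => (H : AffineSubspace ℝ E).closed_of_finiteDimensional
  have hqU : q ∈ Uᶜ := by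
    intro hq'
    obtain ⟨s', hs'⟩ := Set.mem_iUnion.1 hq'
    obtain ⟨hs'𝓕, hqs'⟩ := Set.mem_iUnion.1 hs'
    exact hs'𝓕.2 hqs'
  obtain ⟨ε0, hε0, hball0⟩ := Metric.isOpen_iff.1 hUclosed.isOpen_compl q hqU
  set ε := min ε0 1 with hε_def
  have hε : 0 < ε := lt_min hε0 one_pos
  have hkey : (M : Set E) ∩ Metric.ball q ε ⊆ D := by
    rintro y ⟨hyM, hyb⟩ H
    by_cases hqH : q ∈ (H : AffineSubspace ℝ E)
    · have hyH : y ∈ (H : AffineSubspace ℝ E) := hMgeneric H hqH hyM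
      rw [show f H y = 0 from (hfmem H y).1 hyH, zero_mul]
    · have hfq : f H q ≠ 0 := fun h0 => hqH ((hfmem H q).2 h0)
      have hqpos : 0 < f H q * f H x0 :=
        lt_of_le_of_ne (hqD H) (Ne.symm (mul_ne_zero hfq (hfx0 H)))
      have hznz : ∀ z ∈ Metric.ball q ε, f H z ≠ 0 := by
        intro z hz h0
        have hzH : z ∈ (H : AffineSubspace ℝ E) := (hfmem H z).2 h0
        by_cases h𝓕H : H ∈ 𝓕
        · exact hball0 (Metric.ball_subset_ball (min_le_left _ _) hz)
            (Set.mem_biUnion h𝓕H hzH)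
        · apply h𝓕H
          refine ⟨⟨z, hzH, Metric.mem_closedBall.2 ?_⟩, hqH⟩
          exact le_trans (Metric.mem_ball.1 hz).le (min_le_right _ _)
      have hyq : 0 < f H y * f H q :=
        sign_const (hfcont H) (ball_preconnected (V := V) q ε) hznz hyb
          (Metric.mem_ball_self hε)
      nlinarith [mul_pos hyq hqpos, mul_self_pos.2 hfq]
  show LiesOver M A
  have hM1 : affineSpan ℝ ((M : Set E) ∩ A) ≤ M := affineSpan_le.2 Set.inter_subset_left
  have hM2 : M ≤ affineSpan ℝ ((M : Set E) ∩ A) := by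
    refine le_trans (span_of_ball M hqM hε) (affineSpan_mono ℝ ?_)
    rintro y ⟨hy1, hy2⟩
    refine ⟨hy1, ?_⟩
    rw [hA, hclosCD]
    exact hkey ⟨hy1, hy2⟩
  exact le_antisymm hM2 hM1
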